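/- For every nonnegative integer $m$, $\sum_{i=0}^m \sum_{j=0}^m \binom{m}{i}^2 \binom{m}{j}^2 \binom{i+j}{i} = \sum_{k=0}^m \binom{m}{k}^2\binom{m+k}{k}^2$, i.e. the left-hand side equals the $m$-th Apéry number. -/

import Mathlib

open Finset

/-- Vandermonde in the "diagonal" form. -/
lemma vand_diag (i j : ℕ) :
    (i + j).choose i = ∑ k ∈ Finset.range (j + 1), i.choose k * j.choose k := by
  have h1 : (i + j).choose i = (i + j).choose j := by
    have := Nat.choose_symm (Nat.le_add_right i j)
    simpa using this.symm
  rw [h1, Nat.add_choose_eq, Finset.Nat.sum_antidiagonal_eq_sum_range_succ_mk]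
  refine Finset.sum_congr rfl fun k hk => ?_
  rw [Nat.choose_symm (by simpa using Nat.lt_succ_iff.mp (Finset.mem_range.mp hk))]

lemma key (m k : ℕ) (hk : k ≤ m) :
    ∑ i ∈ Finset.range (m + 1), (m.choose i) ^ 2 * i.choose k
      = m.choose k * (m + (m - k)).choose (m - k) := by
  have hsplit : Finset.range (m + 1) = Finset.range k ∪ Finset.Ico k (m + 1) := by
    rw [Finset.range_eq_Ico, Finset.range_eq_Ico, Finset.Ico_union_Ico_eq_Ico (Nat.zero_le _) (by omega)]
  rw [hsplit, Finset.sum_union (by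
      simp [Finset.disjoint_left, Finset.mem_range, Finset.mem_Ico]; omega)]
  have h0 : ∑ i ∈ Finset.range k, (m.choose i) ^ 2 * i.choose k = 0 := by
    apply Finset.sum_eq_zero
    intro i hi
    rw [Nat.choose_eq_zero_of_lt (Finset.mem_range.mp hi), Nat.mul_zero]
  rw [h0, Nat.zero_add]
  rw [Finset.sum_Ico_eq_sum_range]
  have hlen : m + 1 - k = m - k + 1 := by omega
  rw [hlen]
  have hterm : ∀ t ∈ Finset.range (m - k + 1),
      (m.choose (k + t)) ^ 2 * (k + t).choose k
        = m.choose k * (m.choose (m - k - t) * (m - k).choose t) := by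
    intro t ht
    have htle : t ≤ m - k := Nat.lt_succ_iff.mp (Finset.mem_range.mp ht)
    have hktm : k + t ≤ m := by omega
    have h2 : m.choose (k + t) * (k + t).choose k
        = m.choose k * (m - k).choose t := by
      rw [Nat.choose_mul (n := m) (Nat.le_add_right k t)]
      congr 1
      · simp
    have h3 : m.choose (k + t) = m.choose (m - k - t) := by
      rw [← Nat.choose_symm hktm]
      congr 1
      omega
    calc (m.choose (k + t)) ^ 2 * (k + t).choose k
        = m.choose (k + t) * (m.choose (k + t) * (k + t).choose k) := by ring
      _ = m.choose (m - k - t) * (m.choose k * (m - k).choose t) := by rw [h2, h3]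
      _ = m.choose k * (m.choose (m - k - t) * (m - k).choose t) := by ring
  rw [Finset.sum_congr rfl hterm, ← Finset.mul_sum]
  congr 1
  rw [Nat.add_choose_eq, Finset.Nat.sum_antidiagonal_eq_sum_range_succ_mk,
    ← Finset.sum_range_reflect]
  refine Finset.sum_congr rfl fun t ht => ?_
  have htle : t ≤ m - k := Nat.lt_succ_iff.mp (Finset.mem_range.mp ht)
  congr 2 ; omega

/-- `∑_{i=0}^m ∑_{j=0}^m (m choose i)² (m choose j)² (i+j choose i)`
equals the `m`-th Apéry number `∑_{k=0}^m (m choose k)² (m+k choose k)²`. -/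
theorem stmt_9 (m : ℕ) :
    ∑ i ∈ Finset.range (m + 1), ∑ j ∈ Finset.range (m + 1),
        (m.choose i) ^ 2 * (m.choose j) ^ 2 * (i + j).choose i =
      ∑ k ∈ Finset.range (m + 1), (m.choose k) ^ 2 * ((m + k).choose k) ^ 2 := by
  have step1 : ∀ i ∈ Finset.range (m + 1), ∀ j ∈ Finset.range (m + 1),
      (i + j).choose i = ∑ k ∈ Finset.range (m + 1), i.choose k * j.choose k := by
    intro i hi j hj
    rw [vand_diag]
    apply Finset.sum_subset
    · exact Finset.range_subset_range.mpr (by simp at hj; omega)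
    · intro k hk hnk
      have : j.choose k = 0 := Nat.choose_eq_zero_of_lt (by
        simp only [Finset.mem_range, not_lt] at hnk; omega)
      rw [this, Nat.mul_zero]
  calc ∑ i ∈ Finset.range (m + 1), ∑ j ∈ Finset.range (m + 1),
        (m.choose i) ^ 2 * (m.choose j) ^ 2 * (i + j).choose i
      = ∑ k ∈ Finset.range (m + 1), (∑ i ∈ Finset.range (m + 1),
          (m.choose i) ^ 2 * i.choose k) * (∑ j ∈ Finset.range (m + 1),
          (m.choose j) ^ 2 * j.choose k) := by
        rw [Finset.sum_congr rfl fun i hi => Finset.sum_congr rfl fun j hj => by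
          rw [step1 i hi j hj, Finset.mul_sum]]
        rw [Finset.sum_congr rfl fun i hi => Finset.sum_comm]
        rw [Finset.sum_comm]
        refine Finset.sum_congr rfl fun k hk => ?_
        rw [Finset.sum_mul_sum]
        refine Finset.sum_congr rfl fun i hi => ?_
        refine Finset.sum_congr rfl fun j hj => ?_
        ring
    _ = ∑ k ∈ Finset.range (m + 1),
          (m.choose k * (m + (m - k)).choose (m - k)) ^ 2 := by
        refine Finset.sum_congr rfl fun k hk => ?_
        rw [key m k (by simp at hk; omega), sq]
    _ = ∑ k ∈ Finset.range (m + 1), (m.choose k) ^ 2 * ((m + k).choose k) ^ 2 := by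
        rw [← Finset.sum_range_reflect]
        refine Finset.sum_congr rfl fun k hk => ?_
        have hk' : k ≤ m := by simp at hk; omega
        have h1 : m + 1 - 1 - k = m - k := by omega
        have h2 : m - (m - k) = k := by omega
        rw [h1, h2, Nat.choose_symm hk', mul_pow]
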